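/- Let R be a commutative local ring. If s ∈ R is nilpotent, then the generalized matrix ring K_s(R) is quasipolar. -/

import Mathlib

/-- The generalized matrix ring `K_s(R)` with multiplier `s`. -/
@[ext]
structure GenMatrix (R : Type*) (s : R) where
  a : R
  b : R
  c : R
  d : R

namespace GenMatrix

variable {R : Type*} [Ring R] {s : R}

instance : Add (GenMatrix R s) :=
  ⟨fun X Y => ⟨X.a + Y.a, X.b + Y.b, X.c + Y.c, X.d + Y.d⟩⟩
instance : Neg (GenMatrix R s) := ⟨fun X => ⟨-X.a, -X.b, -X.c, -X.d⟩⟩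
instance : Zero (GenMatrix R s) := ⟨⟨0, 0, 0, 0⟩⟩
instance : One (GenMatrix R s) := ⟨⟨1, 0, 0, 1⟩⟩
instance : Mul (GenMatrix R s) :=
  ⟨fun X Y => ⟨X.a * Y.a + s * (X.b * Y.c), X.a * Y.b + X.b * Y.d,
    X.c * Y.a + X.d * Y.c, s * (X.c * Y.b) + X.d * Y.d⟩⟩

@[simp] lemma add_a (X Y : GenMatrix R s) : (X + Y).a = X.a + Y.a := rfl
@[simp] lemma add_b (X Y : GenMatrix R s) : (X + Y).b = X.b + Y.b := rfl
@[simp] lemma add_c (X Y : GenMatrix R s) : (X + Y).c = X.c + Y.c := rfl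
@[simp] lemma add_d (X Y : GenMatrix R s) : (X + Y).d = X.d + Y.d := rfl
@[simp] lemma neg_a (X : GenMatrix R s) : (-X).a = -X.a := rfl
@[simp] lemma neg_b (X : GenMatrix R s) : (-X).b = -X.b := rfl
@[simp] lemma neg_c (X : GenMatrix R s) : (-X).c = -X.c := rfl
@[simp] lemma neg_d (X : GenMatrix R s) : (-X).d = -X.d := rfl
@[simp] lemma zero_a : (0 : GenMatrix R s).a = 0 := rfl
@[simp] lemma zero_b : (0 : GenMatrix R s).b = 0 := rfl
@[simp] lemma zero_c : (0 : GenMatrix R s).c = 0 := rfl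
@[simp] lemma zero_d : (0 : GenMatrix R s).d = 0 := rfl
@[simp] lemma one_a : (1 : GenMatrix R s).a = 1 := rfl
@[simp] lemma one_b : (1 : GenMatrix R s).b = 0 := rfl
@[simp] lemma one_c : (1 : GenMatrix R s).c = 0 := rfl
@[simp] lemma one_d : (1 : GenMatrix R s).d = 1 := rfl
@[simp] lemma mul_a (X Y : GenMatrix R s) : (X * Y).a = X.a * Y.a + s * (X.b * Y.c) := rfl
@[simp] lemma mul_b (X Y : GenMatrix R s) : (X * Y).b = X.a * Y.b + X.b * Y.d := rfl
@[simp] lemma mul_c (X Y : GenMatrix R s) : (X * Y).c = X.c * Y.a + X.d * Y.c := rfl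
@[simp] lemma mul_d (X Y : GenMatrix R s) : (X * Y).d = s * (X.c * Y.b) + X.d * Y.d := rfl

instance : AddCommGroup (GenMatrix R s) where
  add_assoc X Y Z := by ext <;> simp [add_assoc]
  zero_add X := by ext <;> simp
  add_zero X := by ext <;> simp
  add_comm X Y := by ext <;> simp [add_comm]
  neg_add_cancel X := by ext <;> simp
  nsmul := nsmulRec
  zsmul := zsmulRec

section Central

variable [Fact (s ∈ Set.center R)]

lemma scomm (r : R) : r * s = s * r := Semigroup.mem_center_iff.mp Fact.out r

lemma sshift (r t : R) : r * (s * t) = s * (r * t) := by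
  rw [← mul_assoc, scomm (s := s), mul_assoc]

instance : Ring (GenMatrix R s) where
  __ := (inferInstance : AddCommGroup (GenMatrix R s))
  left_distrib X Y Z := by ext <;> simp [mul_add, add_mul] <;> abel
  right_distrib X Y Z := by ext <;> simp [mul_add, add_mul] <;> abel
  zero_mul X := by ext <;> simp
  mul_zero X := by ext <;> simp
  mul_assoc X Y Z := by
    ext <;> simp only [mul_a, mul_b, mul_c, mul_d, mul_add, add_mul, mul_assoc, sshift] <;> abel
  one_mul X := by ext <;> simp
  mul_one X := by ext <;> simp

end Central

instance central_of_comm {R : Type*} [CommRing R] (s : R) : Fact (s ∈ Set.center R) :=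
  ⟨by rw [Set.center_eq_univ]; trivial⟩

/-- `det_s` of a generalized matrix over a commutative ring. -/
def dets {R : Type*} {s : R} [CommRing R] (A : GenMatrix R s) : R :=
  A.a * A.d - s * (A.b * A.c)

/-- The trace of a generalized matrix. -/
def tr {R : Type*} {s : R} [Ring R] (A : GenMatrix R s) : R := A.a + A.d

end GenMatrix

/-- An element `a` is quasinilpotent if `1 + a*x` is a unit for every `x` commuting with `a`. -/
def IsQuasinilpotent {R : Type*} [Ring R] (a : R) : Prop :=
  ∀ x : R, a * x = x * a → IsUnit (1 + a * x)

/-- An element `a` is quasipolar if there is an idempotent `p` in the double commutant of `a`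
with `a + p` a unit and `a * p` quasinilpotent. -/
def IsQuasipolar {R : Type*} [Ring R] (a : R) : Prop :=
  ∃ p : R, IsIdempotentElem p ∧ (∀ y : R, y * a = a * y → p * y = y * p) ∧
    IsUnit (a + p) ∧ IsQuasinilpotent (a * p)

/-- A ring is quasipolar if every element is quasipolar. -/
def IsQuasipolarRing (R : Type*) [Ring R] : Prop := ∀ a : R, IsQuasipolar a

/-- An element is strongly clean if it is the sum of an idempotent and a unit that commute. -/
def IsStronglyClean {R : Type*} [Ring R] (a : R) : Prop :=
  ∃ e u : R, IsIdempotentElem e ∧ IsUnit u ∧ a = e + u ∧ e * u = u * e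

/-- A ring is strongly clean if every element is strongly clean. -/
def IsStronglyCleanRing (R : Type*) [Ring R] : Prop := ∀ a : R, IsStronglyClean a

/-- `a` is similar to `b` if `b = u⁻¹ * a * u` for some unit `u`. -/
def IsSimilar {R : Type*} [Ring R] (a b : R) : Prop :=
  ∃ u : Rˣ, b = ↑u⁻¹ * a * ↑u

/-- The Jacobson radical of a ring: the intersection of all maximal left ideals. -/
def JacobsonRadical (R : Type*) [Ring R] : Ideal R := Ideal.jacobson ⊥



/-! ### Auxiliary lemmas for the proof -/

namespace QP

open IsLocalRing

lemma un {R : Type*} [CommRing R] [IsLocalRing R] {x : R} (h : ¬IsUnit x) :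
    x ∈ IsLocalRing.maximalIdeal R :=
  (IsLocalRing.mem_maximalIdeal x).mpr (mem_nonunits_iff.mpr h)

lemma nu {R : Type*} [CommRing R] [IsLocalRing R] {x : R}
    (h : x ∈ IsLocalRing.maximalIdeal R) : ¬IsUnit x :=
  mem_nonunits_iff.mp ((IsLocalRing.mem_maximalIdeal x).mp h)

lemma unit_add_nonunit {R : Type*} [CommRing R] [IsLocalRing R] {x y : R}
    (hx : IsUnit x) (hy : ¬IsUnit y) : IsUnit (x + y) := by
  by_contra h
  have h1 : x ∈ IsLocalRing.maximalIdeal R := by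
    have := sub_mem (un h) (un hy)
    simpa using this
  exact (nu h1) hx

lemma nonunit_of_nilpotent {R : Type*} [CommRing R] [Nontrivial R] {x : R}
    (h : IsNilpotent x) : ¬IsUnit x := by
  intro hu
  obtain ⟨n, hn⟩ := h
  have h2 := hu.pow n
  rw [hn] at h2
  exact zero_ne_one (isUnit_zero_iff.mp h2)

lemma newton {R : Type*} [CommRing R] (t δ : R) :
    ∀ n : ℕ, ∀ x : R, (x^2 - t*x + δ)^(n+1) = 0 → IsUnit (2*x - t) →
      ∃ β : R, β^2 - t*β + δ = 0 ∧ IsNilpotent (β - x) := by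
  intro n
  induction n with
  | zero =>
    intro x h hu
    exact ⟨x, by simpa using h, by rw [sub_self]; exact IsNilpotent.zero⟩
  | succ n ih =>
    intro x h hu
    obtain ⟨w, hw⟩ := hu.exists_right_inv
    have hfw : IsNilpotent ((x^2 - t*x + δ)*w) := ⟨n+2, by rw [mul_pow, h, zero_mul]⟩
    have hkey : (x - (x^2 - t*x + δ)*w)^2 - t*(x - (x^2 - t*x + δ)*w) + δ
        = (x^2 - t*x + δ)^2 * w^2 := by
      linear_combination (-(x^2 - t*x + δ)) * hw
    have h2 : ((x - (x^2 - t*x + δ)*w)^2 - t*(x - (x^2 - t*x + δ)*w) + δ)^(n+1) = 0 := by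
      rw [hkey, mul_pow, ← pow_mul, show 2*(n+1) = (n+1+1) + n from by ring, pow_add, h,
        zero_mul, zero_mul]
    have hu' : IsUnit (2*(x - (x^2 - t*x + δ)*w) - t) := by
      rw [show 2*(x - (x^2 - t*x + δ)*w) - t = (-(2*((x^2 - t*x + δ)*w))) + (2*x - t) from by ring]
      exact (((Commute.all _ _).isNilpotent_mul_left hfw).neg).isUnit_add_right_of_commute hu
        (Commute.all _ _)
    obtain ⟨β, hb1, hb2⟩ := ih _ h2 hu'
    refine ⟨β, hb1, ?_⟩
    rw [show β - x = (β - (x - (x^2 - t*x + δ)*w)) + (-((x^2 - t*x + δ)*w)) from by ring]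
    exact (Commute.all _ _).isNilpotent_add hb2 hfw.neg

end QP

namespace GenMatrix

variable {R : Type*} [CommRing R] {s : R}

/-- The scalar matrix. -/
def scal (r : R) : GenMatrix R s := ⟨r, 0, 0, r⟩

@[simp] lemma scal_a (r : R) : (scal (s := s) r).a = r := rfl
@[simp] lemma scal_b (r : R) : (scal (s := s) r).b = 0 := rfl
@[simp] lemma scal_c (r : R) : (scal (s := s) r).c = 0 := rfl
@[simp] lemma scal_d (r : R) : (scal (s := s) r).d = r := rfl

lemma scal_comm (r : R) (X : GenMatrix R s) : scal r * X = X * scal r := by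
  ext <;> simp <;> ring

lemma isUnit_of_isUnit_dets (Z : GenMatrix R s) (h : IsUnit (dets Z)) : IsUnit Z := by
  obtain ⟨w, hw⟩ := h.exists_right_inv
  rw [show dets Z = Z.a * Z.d - s * (Z.b * Z.c) from rfl] at hw
  refine ⟨⟨Z, ⟨w*Z.d, -(w*Z.b), -(w*Z.c), w*Z.a⟩, ?_, ?_⟩, rfl⟩ <;>
    ext <;> simp <;> first | ring1 | linear_combination hw

lemma isUnit_of_diag [IsLocalRing R] (hs : ¬IsUnit s) (Z : GenMatrix R s)
    (h1 : IsUnit Z.a) (h2 : IsUnit Z.d) : IsUnit Z := by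
  apply isUnit_of_isUnit_dets
  rw [show dets Z = Z.a * Z.d - s * (Z.b * Z.c) from rfl, sub_eq_add_neg]
  exact QP.unit_add_nonunit (h1.mul h2)
    (QP.nu (neg_mem (Ideal.mul_mem_right _ _ (QP.un hs))))

lemma quasinil_of_diag [IsLocalRing R] (hs : ¬IsUnit s) (Y : GenMatrix R s)
    (h1 : ¬IsUnit Y.a) (h2 : ¬IsUnit Y.d) : IsQuasinilpotent Y := by
  intro x _
  apply isUnit_of_diag hs
  · show IsUnit (1 + (Y.a * x.a + s * (Y.b * x.c)))
    exact QP.unit_add_nonunit isUnit_one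
      (QP.nu (add_mem (Ideal.mul_mem_right _ _ (QP.un h1))
        (Ideal.mul_mem_right _ _ (QP.un hs))))
  · show IsUnit (1 + (s * (Y.c * x.b) + Y.d * x.d))
    exact QP.unit_add_nonunit isUnit_one
      (QP.nu (add_mem (Ideal.mul_mem_right _ _ (QP.un hs))
        (Ideal.mul_mem_right _ _ (QP.un h2))))

lemma hard [IsLocalRing R] (hs : ¬IsUnit s) (A : GenMatrix R s) (β : R)
    (hroot : β^2 - (A.a + A.d)*β + (A.a*A.d - s*(A.b*A.c)) = 0)
    (hβ : ¬IsUnit β)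
    (hcase : (¬IsUnit A.a ∧ IsUnit A.d) ∨ (IsUnit A.a ∧ ¬IsUnit A.d)) :
    IsQuasipolar A := by
  have hβm := QP.un hβ
  have hsm := QP.un hs
  have ht : IsUnit (A.a + A.d) := by
    rcases hcase with ⟨h1, h2⟩ | ⟨h1, h2⟩
    · rw [add_comm]; exact QP.unit_add_nonunit h2 h1
    · exact QP.unit_add_nonunit h1 h2
  have hu : IsUnit (2*β - (A.a + A.d)) := by
    rw [show 2*β - (A.a + A.d) = -(A.a + A.d) + 2*β from by ring]
    exact QP.unit_add_nonunit ht.neg (QP.nu (Ideal.mul_mem_left _ 2 hβm))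
  obtain ⟨v, hv⟩ := hu.exists_right_inv
  set P : GenMatrix R s := scal v * (A + scal (β - (A.a + A.d))) with hP
  have hPa : P.a = v*(β - A.d) := by rw [hP]; simp; try ring
  have hPb : P.b = v*A.b := by rw [hP]; simp; try ring
  have hPc : P.c = v*A.c := by rw [hP]; simp; try ring
  have hPd : P.d = v*(β - A.a) := by rw [hP]; simp; try ring
  refine ⟨P, ?_, ?_, ?_, ?_⟩
  · -- idempotent
    have hpp : P * P = P := by
      ext
      · rw [mul_a, hPa, hPb, hPc]
        linear_combination (-(v^2))*hroot + (v*(β - A.d))*hv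
      · rw [mul_b, hPa, hPb, hPd]
        linear_combination (v*A.b)*hv
      · rw [mul_c, hPa, hPc, hPd]
        linear_combination (v*A.c)*hv
      · rw [mul_d, hPb, hPc, hPd]
        linear_combination (-(v^2))*hroot + (v*(β - A.a))*hv
    exact hpp
  · -- double commutant
    intro y hy
    have h1 : (A + scal (β - (A.a + A.d))) * y = y * (A + scal (β - (A.a + A.d))) := by
      rw [add_mul, mul_add, ← hy, scal_comm]
    rw [hP, mul_assoc, h1, ← mul_assoc, scal_comm, mul_assoc]
  · -- A + P is a unit
    apply isUnit_of_diag hs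
    · rw [add_a, hPa]
      have key : IsUnit ((2*β - (A.a + A.d)) * (A.a + v*(β - A.d))) := by
        rw [show (2*β - (A.a + A.d)) * (A.a + v*(β - A.d))
            = (2*β - (A.a + A.d))*A.a + (β - A.d) from by linear_combination (β - A.d)*hv]
        rcases hcase with ⟨h1, h2⟩ | ⟨h1, h2⟩
        · rw [show (2*β - (A.a + A.d))*A.a + (β - A.d)
              = -A.d + ((2*β - (A.a + A.d))*A.a + β) from by ring]
          exact QP.unit_add_nonunit h2.neg
            (QP.nu (add_mem (Ideal.mul_mem_left _ _ (QP.un h1)) hβm))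
        · rw [show (2*β - (A.a + A.d))*A.a + (β - A.d)
              = -(A.a*A.a) + (2*β*A.a - A.d*A.a + β - A.d) from by ring]
          exact QP.unit_add_nonunit (h1.mul h1).neg
            (QP.nu (sub_mem (add_mem (sub_mem
              (Ideal.mul_mem_right _ _ (Ideal.mul_mem_left _ 2 hβm))
              (Ideal.mul_mem_right _ _ (QP.un h2))) hβm) (QP.un h2)))
      exact isUnit_of_mul_isUnit_right key
    · rw [add_d, hPd]
      have key : IsUnit ((2*β - (A.a + A.d)) * (A.d + v*(β - A.a))) := by
        rw [show (2*β - (A.a + A.d)) * (A.d + v*(β - A.a))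
            = (2*β - (A.a + A.d))*A.d + (β - A.a) from by linear_combination (β - A.a)*hv]
        rcases hcase with ⟨h1, h2⟩ | ⟨h1, h2⟩
        · rw [show (2*β - (A.a + A.d))*A.d + (β - A.a)
              = -(A.d*A.d) + (2*β*A.d - A.a*A.d + β - A.a) from by ring]
          exact QP.unit_add_nonunit (h2.mul h2).neg
            (QP.nu (sub_mem (add_mem (sub_mem
              (Ideal.mul_mem_right _ _ (Ideal.mul_mem_left _ 2 hβm))
              (Ideal.mul_mem_right _ _ (QP.un h1))) hβm) (QP.un h1)))
        · rw [show (2*β - (A.a + A.d))*A.d + (β - A.a)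
              = -A.a + ((2*β - (A.a + A.d))*A.d + β) from by ring]
          exact QP.unit_add_nonunit h1.neg
            (QP.nu (add_mem (Ideal.mul_mem_left _ _ (QP.un h2)) hβm))
      exact isUnit_of_mul_isUnit_right key
  · -- A * P is quasinilpotent
    apply quasinil_of_diag hs
    · apply QP.nu
      have e : (A*P).a = A.a * (v*(β - A.d)) + s*(A.b*(v*A.c)) := by
        rw [mul_a, hPa, hPc]
      rw [e]
      refine add_mem ?_ (Ideal.mul_mem_right _ _ hsm)
      rcases hcase with ⟨h1, h2⟩ | ⟨h1, h2⟩
      · exact Ideal.mul_mem_right _ _ (QP.un h1)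
      · exact Ideal.mul_mem_left _ _ (Ideal.mul_mem_left _ _ (sub_mem hβm (QP.un h2)))
    · apply QP.nu
      have e : (A*P).d = s*(A.c*(v*A.b)) + A.d*(v*(β - A.a)) := by
        rw [mul_d, hPb, hPd]
      rw [e]
      refine add_mem (Ideal.mul_mem_right _ _ hsm) ?_
      rcases hcase with ⟨h1, h2⟩ | ⟨h1, h2⟩
      · exact Ideal.mul_mem_left _ _ (Ideal.mul_mem_left _ _ (sub_mem hβm (QP.un h1)))
      · exact Ideal.mul_mem_right _ _ (QP.un h2)

end GenMatrix

/-- for a commutative local ring `R`, if `s ∈ R` is nilpotent then `K_s(R)`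
is quasipolar. -/
theorem genMatrix_isQuasipolarRing_of_isNilpotent {R : Type*} [CommRing R] [IsLocalRing R]
    (s : R) (hs : IsNilpotent s) :
    IsQuasipolarRing (GenMatrix R s) := by
  intro A
  have hs' : ¬IsUnit s := QP.nonunit_of_nilpotent hs
  by_cases ha : IsUnit A.a <;> by_cases hd : IsUnit A.d
  · refine ⟨0, IsIdempotentElem.zero, fun y _ => by rw [zero_mul, mul_zero], ?_, ?_⟩
    · rw [add_zero]; exact GenMatrix.isUnit_of_diag hs' A ha hd
    · rw [mul_zero]; intro x _; rw [zero_mul, add_zero]; exact isUnit_one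
  · -- A.a unit, A.d not
    have hroot0 : IsNilpotent (A.d^2 - (A.a + A.d)*A.d + (A.a*A.d - s*(A.b*A.c))) := by
      rw [show A.d^2 - (A.a + A.d)*A.d + (A.a*A.d - s*(A.b*A.c)) = -(s*(A.b*A.c)) from by ring]
      exact ((Commute.all _ _).isNilpotent_mul_right hs).neg
    obtain ⟨n, hn⟩ := hroot0
    have hn' : (A.d^2 - (A.a + A.d)*A.d + (A.a*A.d - s*(A.b*A.c)))^(n+1) = 0 := by
      rw [pow_succ, hn, zero_mul]
    have hu0 : IsUnit (2*A.d - (A.a + A.d)) := by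
      rw [show 2*A.d - (A.a + A.d) = -A.a + A.d from by ring]
      exact QP.unit_add_nonunit ha.neg hd
    obtain ⟨β, hroot, hnilβ⟩ := QP.newton _ _ n _ hn' hu0
    have hβ : ¬IsUnit β := by
      apply QP.nu
      rw [show β = A.d + (β - A.d) from by ring]
      exact add_mem (QP.un hd) (QP.un (QP.nonunit_of_nilpotent hnilβ))
    exact GenMatrix.hard hs' A β hroot hβ (Or.inr ⟨ha, hd⟩)
  · -- A.a not unit, A.d unit
    have hroot0 : IsNilpotent (A.a^2 - (A.a + A.d)*A.a + (A.a*A.d - s*(A.b*A.c))) := by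
      rw [show A.a^2 - (A.a + A.d)*A.a + (A.a*A.d - s*(A.b*A.c)) = -(s*(A.b*A.c)) from by ring]
      exact ((Commute.all _ _).isNilpotent_mul_right hs).neg
    obtain ⟨n, hn⟩ := hroot0
    have hn' : (A.a^2 - (A.a + A.d)*A.a + (A.a*A.d - s*(A.b*A.c)))^(n+1) = 0 := by
      rw [pow_succ, hn, zero_mul]
    have hu0 : IsUnit (2*A.a - (A.a + A.d)) := by
      rw [show 2*A.a - (A.a + A.d) = -A.d + A.a from by ring]
      exact QP.unit_add_nonunit hd.neg ha
    obtain ⟨β, hroot, hnilβ⟩ := QP.newton _ _ n _ hn' hu0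
    have hβ : ¬IsUnit β := by
      apply QP.nu
      rw [show β = A.a + (β - A.a) from by ring]
      exact add_mem (QP.un ha) (QP.un (QP.nonunit_of_nilpotent hnilβ))
    exact GenMatrix.hard hs' A β hroot hβ (Or.inl ⟨ha, hd⟩)
  · refine ⟨1, IsIdempotentElem.one, fun y _ => by rw [one_mul, mul_one], ?_, ?_⟩
    · apply GenMatrix.isUnit_of_diag hs'
      · show IsUnit (A.a + 1)
        rw [add_comm]; exact QP.unit_add_nonunit isUnit_one ha
      · show IsUnit (A.d + 1)
        rw [add_comm]; exact QP.unit_add_nonunit isUnit_one hd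
    · rw [mul_one]; exact GenMatrix.quasinil_of_diag hs' A ha hd
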